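/- Let u be a Schwartz-class solution of the derivative nonlinear Schrödinger equation i∂_t u + ∂_x² u = −i∂_x(|u|² u). Then the momentum P(u(t)) = Im ∫_ℝ \overline{u}(t,x) ∂_x u(t,x) dx + (1/2) ∫_ℝ |u(t,x)|⁴ dx is independent of t. -/

import Mathlib

open MeasureTheory Complex

/-- A Schwartz-class solution of the derivative nonlinear Schrödinger equation
`i∂_t u + ∂_x² u = −i∂_x(|u|²u)`: `u` is smooth in both variables, `u(t,·)` is Schwartz
for every `t`, all space-time derivatives decay rapidly in `x` uniformly for `t` in
compact sets, and the equation holds pointwise. -/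
def IsDNLSSolution (u : ℝ → ℝ → ℂ) : Prop :=
  ContDiff ℝ (⊤ : ℕ∞) (fun q : ℝ × ℝ => u q.1 q.2) ∧
  (∀ t : ℝ, ∃ φ : SchwartzMap ℝ ℂ, ∀ x : ℝ, φ x = u t x) ∧
  (∀ (i j k : ℕ) (K : Set ℝ), IsCompact K → ∃ C : ℝ, ∀ t ∈ K, ∀ x : ℝ,
    |x| ^ k * ‖iteratedDeriv i (fun s => iteratedDeriv j (fun y => u s y) x) t‖ ≤ C) ∧
  (∀ t x : ℝ,
    Complex.I * deriv (fun s => u s x) t + deriv (deriv (u t)) x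
      = -Complex.I * deriv (fun y => (‖u t y‖ : ℂ) ^ 2 * u t y) x)

/-- The DNLS momentum functional
`P(v) = Im ∫ conj(v) v_x dx + (1/2) ∫ |v|⁴ dx`. -/
noncomputable def momentum (v : ℝ → ℂ) : ℝ :=
  (∫ x : ℝ, (starRingEnd ℂ) (v x) * deriv v x).im + (1 / 2) * ∫ x : ℝ, ‖v x‖ ^ 4

/- ## Auxiliary infrastructure -/

noncomputable def DNLS.pdx (g : ℝ × ℝ → ℂ) : ℝ × ℝ → ℂ := fun q => fderiv ℝ g q (0, 1)
noncomputable def DNLS.pdt (g : ℝ × ℝ → ℂ) : ℝ × ℝ → ℂ := fun q => fderiv ℝ g q (1, 0)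

namespace DNLS

theorem contDiff_pdx {g : ℝ × ℝ → ℂ} (hg : ContDiff ℝ (⊤ : ℕ∞) g) :
    ContDiff ℝ (⊤ : ℕ∞) (pdx g) :=
  (hg.fderiv_right (by norm_cast)).clm_apply contDiff_const

theorem contDiff_pdt {g : ℝ × ℝ → ℂ} (hg : ContDiff ℝ (⊤ : ℕ∞) g) :
    ContDiff ℝ (⊤ : ℕ∞) (pdt g) :=
  (hg.fderiv_right (by norm_cast)).clm_apply contDiff_const

theorem hasDerivAt_pdx {g : ℝ × ℝ → ℂ} (hg : ContDiff ℝ (⊤ : ℕ∞) g) (t x : ℝ) :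
    HasDerivAt (fun y => g (t, y)) (pdx g (t, x)) x :=
  (hg.differentiable (by norm_cast) (t, x)).hasFDerivAt.comp_hasDerivAt x
    ((hasDerivAt_const x t).prodMk (hasDerivAt_id x))

theorem hasDerivAt_pdt {g : ℝ × ℝ → ℂ} (hg : ContDiff ℝ (⊤ : ℕ∞) g) (t x : ℝ) :
    HasDerivAt (fun s => g (s, x)) (pdt g (t, x)) t :=
  (hg.differentiable (by norm_cast) (t, x)).hasFDerivAt.comp_hasDerivAt t
    ((hasDerivAt_id t).prodMk (hasDerivAt_const t x))

theorem pdx_pdt_comm {g : ℝ × ℝ → ℂ} (hg : ContDiff ℝ (⊤ : ℕ∞) g) (q : ℝ × ℝ) :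
    pdx (pdt g) q = pdt (pdx g) q := by
  have hdiff : DifferentiableAt ℝ (fderiv ℝ g) q := by
    exact ((hg.fderiv_right (m := ((⊤:ℕ∞) : WithTop ℕ∞)) (by norm_cast)).differentiable
      (by norm_cast)) q
  have h1 : pdx (pdt g) q = fderiv ℝ (fderiv ℝ g) q (0, 1) (1, 0) := by
    unfold pdx pdt
    rw [fderiv_clm_apply hdiff (differentiableAt_const _)]
    simp
  have h2 : pdt (pdx g) q = fderiv ℝ (fderiv ℝ g) q (1, 0) (0, 1) := by
    unfold pdx pdt
    rw [fderiv_clm_apply hdiff (differentiableAt_const _)]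
    simp
  rw [h1, h2]
  exact (hg.contDiffAt.isSymmSndFDerivAt (by rw [minSmoothness_of_isRCLikeNormedField]; norm_cast)) _ _

theorem continuous_slice {g : ℝ × ℝ → ℂ} (hg : Continuous g) (t : ℝ) :
    Continuous (fun x => g (t, x)) :=
  hg.comp (continuous_const.prodMk continuous_id)

protected theorem _root_.HasDerivAt.conjC {h : ℝ → ℂ} {h' : ℂ} {x : ℝ}
    (H : HasDerivAt h h' x) :
    HasDerivAt (fun y => (starRingEnd ℂ) (h y)) ((starRingEnd ℂ) h') x := by
  simpa only [starRingEnd_apply] using H.star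

protected theorem _root_.HasDerivAt.reC {h : ℝ → ℂ} {h' : ℂ} {x : ℝ}
    (H : HasDerivAt h h' x) : HasDerivAt (fun y => (h y).re) h'.re x := by
  exact Complex.reCLM.hasFDerivAt.comp_hasDerivAt x H

protected theorem _root_.HasDerivAt.imC {h : ℝ → ℂ} {h' : ℂ} {x : ℝ}
    (H : HasDerivAt h h' x) : HasDerivAt (fun y => (h y).im) h'.im x := by
  exact Complex.imCLM.hasFDerivAt.comp_hasDerivAt x H

/-- The fundamental pointwise algebraic identity: the momentum density time-derivative
is the `x`-derivative of an explicit flux. -/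
theorem alg_identity (a b c d : ℂ) :
    ((starRingEnd ℂ) (I*c - ((starRingEnd ℂ) b * a^2 + 2*(starRingEnd ℂ) a*a*b)) * b
      + (starRingEnd ℂ) a * (I*d - ((starRingEnd ℂ) c*a^2 + 4*(starRingEnd ℂ) b*a*b
          + 2*(starRingEnd ℂ) a*b^2 + 2*(starRingEnd ℂ) a*a*c))).im
    + (1/2)*(2*((starRingEnd ℂ) a*a).re*
        (((starRingEnd ℂ) (I*c - ((starRingEnd ℂ) b * a^2 + 2*(starRingEnd ℂ) a*a*b))*a
          + (starRingEnd ℂ) a*(I*c - ((starRingEnd ℂ) b * a^2 + 2*(starRingEnd ℂ) a*a*b))).re))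
    = ((starRingEnd ℂ) b * c + (starRingEnd ℂ) a * d).re
      - ((starRingEnd ℂ) c * b + (starRingEnd ℂ) b * c).re
      - 3*((((starRingEnd ℂ) b*a + (starRingEnd ℂ) a*b).re) * (((starRingEnd ℂ) a*b).im)
          + (((starRingEnd ℂ) a*a).re) * (((starRingEnd ℂ) b*b + (starRingEnd ℂ) a*c).im))
      - 3*(((starRingEnd ℂ) a*a).re)^2 * (((starRingEnd ℂ) b*a + (starRingEnd ℂ) a*b).re) := by
  obtain ⟨a1,a2⟩ := a; obtain ⟨b1,b2⟩ := b; obtain ⟨c1,c2⟩ := c; obtain ⟨d1,d2⟩ := d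
  simp only [pow_two, Complex.add_im, Complex.add_re, Complex.sub_re, Complex.sub_im,
    Complex.mul_re, Complex.mul_im, Complex.conj_re, Complex.conj_im, Complex.I_re,
    Complex.I_im, Complex.re_ofNat, Complex.im_ofNat]
  ring

theorem le_weight {r C0 C2 x : ℝ} (hr : 0 ≤ r) (h0 : r ≤ C0) (h2 : x^2 * r ≤ C2) :
    r ≤ (C0 + C2) * (1 + x^2)⁻¹ := by
  have hpos : (0:ℝ) < 1 + x^2 := by positivity
  rw [← div_eq_mul_inv, le_div_iff₀ hpos]
  nlinarith

theorem weight_le_one (x : ℝ) : (1 + x^2)⁻¹ ≤ 1 := by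
  rw [inv_le_one_iff₀]
  right; nlinarith [sq_nonneg x]

theorem weight_nonneg (x : ℝ) : (0:ℝ) ≤ (1 + x^2)⁻¹ := by positivity

theorem mul_weight {A B C D x : ℝ} (hA : 0 ≤ A) (hB : 0 ≤ B) (hC : 0 ≤ C)
    (h1 : A ≤ C) (h2 : B ≤ D * (1+x^2)⁻¹) : A * B ≤ C * D * (1+x^2)⁻¹ := by
  calc A * B ≤ C * (D * (1+x^2)⁻¹) := mul_le_mul h1 h2 hB hC
    _ = C * D * (1+x^2)⁻¹ := by ring

theorem integrable_weight (M : ℝ) : Integrable (fun x : ℝ => M * (1 + x^2)⁻¹) :=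
  integrable_inv_one_add_sq.const_mul M

theorem tendsto_weight_atTop (M : ℝ) :
    Filter.Tendsto (fun x : ℝ => M * (1 + x^2)⁻¹) Filter.atTop (nhds 0) := by
  have h : Filter.Tendsto (fun x : ℝ => (1 + x^2)⁻¹) Filter.atTop (nhds 0) :=
    Filter.Tendsto.inv_tendsto_atTop
      (Filter.tendsto_atTop_add_const_left _ 1 (Filter.tendsto_pow_atTop two_ne_zero))
  simpa using Filter.Tendsto.const_mul M h

theorem tendsto_weight_atBot (M : ℝ) :
    Filter.Tendsto (fun x : ℝ => M * (1 + x^2)⁻¹) Filter.atBot (nhds 0) := by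
  have h := (tendsto_weight_atTop M).comp Filter.tendsto_neg_atBot_atTop
  have heq : ((fun x : ℝ => M * (1 + x ^ 2)⁻¹) ∘ Neg.neg) = fun x : ℝ => M * (1 + x ^ 2)⁻¹ := by
    funext x; simp [Function.comp]
  rwa [heq] at h

theorem norm4_eq (z : ℂ) : ‖z‖ ^ 4 = (((starRingEnd ℂ) z * z).re) ^ 2 := by
  have h : ((starRingEnd ℂ) z * z).re = ‖z‖^2 := by
    rw [mul_comm, Complex.mul_conj]
    simp [Complex.normSq_eq_norm_sq, ← Complex.ofReal_pow]
  rw [h]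
  ring

theorem abs_re_le_norm (z : ℂ) : |z.re| ≤ ‖z‖ := Complex.abs_re_le_norm z
theorem abs_im_le_norm (z : ℂ) : |z.im| ≤ ‖z‖ := Complex.abs_im_le_norm z

end DNLS

/-- Conservation of momentum for DNLS: `P(u(t))` is independent of time. -/
theorem dnls_momentum_conservation (u : ℝ → ℝ → ℂ) (hu : IsDNLSSolution u) (t₁ t₂ : ℝ) :
    momentum (u t₁) = momentum (u t₂) := by
  obtain ⟨hs, -, hd, heq⟩ := hu
  set f : ℝ × ℝ → ℂ := (fun q : ℝ × ℝ => u q.1 q.2) with hfdef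
  set V : ℝ × ℝ → ℂ := DNLS.pdx f with hVdef
  set W : ℝ × ℝ → ℂ := DNLS.pdx V with hWdef
  set Z : ℝ × ℝ → ℂ := DNLS.pdx W with hZdef
  set Pt : ℝ × ℝ → ℂ := DNLS.pdt f with hPtdef
  set Vt : ℝ × ℝ → ℂ := DNLS.pdt V with hVtdef
  have hsV : ContDiff ℝ (⊤ : ℕ∞) V := DNLS.contDiff_pdx hs
  have hsW : ContDiff ℝ (⊤ : ℕ∞) W := DNLS.contDiff_pdx hsV
  have hsZ : ContDiff ℝ (⊤ : ℕ∞) Z := DNLS.contDiff_pdx hsW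
  have hsPt : ContDiff ℝ (⊤ : ℕ∞) Pt := DNLS.contDiff_pdt hs
  have hsVt : ContDiff ℝ (⊤ : ℕ∞) Vt := DNLS.contDiff_pdt hsV
  have hxu : ∀ t x : ℝ, HasDerivAt (fun y => u t y) (V (t, x)) x := fun t x =>
    DNLS.hasDerivAt_pdx hs t x
  have hxV : ∀ t x : ℝ, HasDerivAt (fun y => V (t, y)) (W (t, x)) x := fun t x =>
    DNLS.hasDerivAt_pdx hsV t x
  have hxW : ∀ t x : ℝ, HasDerivAt (fun y => W (t, y)) (Z (t, x)) x := fun t x =>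
    DNLS.hasDerivAt_pdx hsW t x
  have htu : ∀ t x : ℝ, HasDerivAt (fun s => u s x) (Pt (t, x)) t := fun t x =>
    DNLS.hasDerivAt_pdt hs t x
  have htV : ∀ t x : ℝ, HasDerivAt (fun s => V (s, x)) (Vt (t, x)) t := fun t x =>
    DNLS.hasDerivAt_pdt hsV t x
  have hderiv_u : ∀ t : ℝ, deriv (u t) = fun x => V (t, x) := fun t =>
    funext fun x => (hxu t x).deriv
  -- the PDE, solved for the time derivative
  have hPteq : ∀ t x : ℝ, Pt (t, x) = I * W (t, x)
      - ((starRingEnd ℂ) (V (t, x)) * (u t x)^2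
        + 2*(starRingEnd ℂ) (u t x) * u t x * V (t, x)) := by
    intro t x
    have h := heq t x
    rw [(htu t x).deriv] at h
    rw [hderiv_u t, (hxV t x).deriv] at h
    have hfun : (fun y => ((‖u t y‖ : ℂ))^2 * u t y)
        = fun y => (starRingEnd ℂ) (u t y) * u t y * u t y := by
      funext y; rw [RCLike.conj_mul]; norm_cast
    rw [hfun] at h
    have hN : HasDerivAt (fun y => (starRingEnd ℂ) (u t y) * u t y * u t y)
        (((starRingEnd ℂ) (V (t, x)) * u t x + (starRingEnd ℂ) (u t x) * V (t, x)) * u t x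
          + (starRingEnd ℂ) (u t x) * u t x * V (t, x)) x :=
      ((hxu t x).conjC.mul (hxu t x)).mul (hxu t x)
    rw [hN.deriv] at h
    linear_combination (-I) * h + (Pt (t, x) + ((starRingEnd ℂ) (V (t, x)) * (u t x)^2
      + 2*(starRingEnd ℂ) (u t x) * u t x * V (t, x))) * Complex.I_mul_I
  -- Clairaut + PDE: the mixed derivative
  have hVteq : ∀ t x : ℝ, Vt (t, x) = I * Z (t, x)
      - ((starRingEnd ℂ) (W (t, x)) * (u t x)^2
        + 4*(starRingEnd ℂ) (V (t, x))*(u t x)*(V (t, x))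
        + 2*(starRingEnd ℂ) (u t x)*(V (t, x))^2
        + 2*(starRingEnd ℂ) (u t x)*(u t x)*(W (t, x))) := by
    intro t x
    have hswap : Vt (t, x) = DNLS.pdx Pt (t, x) := (DNLS.pdx_pdt_comm hs (t, x)).symm
    have h2 : HasDerivAt (fun y => Pt (t, y)) (DNLS.pdx Pt (t, x)) x :=
      DNLS.hasDerivAt_pdx hsPt t x
    have h3 : (fun y => Pt (t, y)) = fun y => I * W (t, y)
        - ((starRingEnd ℂ) (V (t, y)) * (u t y)^2
          + 2*(starRingEnd ℂ) (u t y) * u t y * V (t, y)) :=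
      funext fun y => hPteq t y
    rw [h3] at h2
    have h4 : HasDerivAt (fun y => I * W (t, y)
        - ((starRingEnd ℂ) (V (t, y)) * (u t y)^2
          + 2*(starRingEnd ℂ) (u t y) * u t y * V (t, y)))
        (I * Z (t, x)
          - ((starRingEnd ℂ) (W (t, x)) * (u t x)^2
            + 4*(starRingEnd ℂ) (V (t, x))*(u t x)*(V (t, x))
            + 2*(starRingEnd ℂ) (u t x)*(V (t, x))^2
            + 2*(starRingEnd ℂ) (u t x)*(u t x)*(W (t, x)))) x := by
      have e1 := (hxW t x).const_mul I
      have e2 := (hxV t x).conjC.mul ((hxu t x).mul (hxu t x))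
      have e3 := (((hxu t x).conjC.mul (hxu t x)).mul (hxV t x)).const_mul (2:ℂ)
      have ee := e1.sub (e2.add e3)
      refine (ee.congr_deriv ?_).congr_of_eventuallyEq (Filter.Eventually.of_forall fun y => ?_)
      · simp only [Pi.mul_apply, Pi.sub_apply, Pi.add_apply, Pi.pow_apply]; push_cast; ring
      · simp only [Pi.mul_apply, Pi.sub_apply, Pi.add_apply, Pi.pow_apply]; push_cast; ring
    rw [hswap]
    exact h2.unique h4
  -- rewrite the momentum functional
  have hmomeq : (fun s => momentum (u s)) = fun s =>
      (∫ x : ℝ, (starRingEnd ℂ) (u s x) * V (s, x)).im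
        + (1/2) * ∫ x : ℝ, (((starRingEnd ℂ) (u s x) * u s x).re)^2 := by
    funext s
    have h1 : (∫ x : ℝ, (starRingEnd ℂ) (u s x) * deriv (u s) x)
        = ∫ x : ℝ, (starRingEnd ℂ) (u s x) * V (s, x) := by rw [hderiv_u s]
    have h2 : (∫ x : ℝ, ‖u s x‖^4)
        = ∫ x : ℝ, (((starRingEnd ℂ) (u s x) * u s x).re)^2 := by
      congr 1; funext x; exact DNLS.norm4_eq _
    rw [momentum, h1, h2]
  have hP : ∀ t₀ : ℝ, HasDerivAt (fun s => momentum (u s)) 0 t₀ := by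
    intro t₀
    have hK : IsCompact (Set.Icc (t₀-1) (t₀+1)) := isCompact_Icc
    have hball : Metric.ball t₀ 1 ⊆ Set.Icc (t₀-1) (t₀+1) := by
      intro s hsb
      rw [Metric.mem_ball, Real.dist_eq] at hsb
      have h := abs_lt.mp hsb
      exact ⟨by linarith [h.1], by linarith [h.2]⟩
    have ht₀ball : t₀ ∈ Metric.ball t₀ 1 := Metric.mem_ball_self one_pos
    have hbnd : ∀ i j : ℕ, ∃ M : ℝ, 0 ≤ M ∧ ∀ s ∈ Metric.ball t₀ 1, ∀ x : ℝ,
        ‖iteratedDeriv i (fun σ => iteratedDeriv j (fun y => u σ y) x) s‖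
          ≤ M * (1+x^2)⁻¹ := by
      intro i j
      obtain ⟨C0, hC0⟩ := hd i j 0 _ hK
      obtain ⟨C2, hC2⟩ := hd i j 2 _ hK
      refine ⟨max (C0+C2) 0, le_max_right _ _, fun s hsb x => ?_⟩
      have h0 := hC0 s (hball hsb) x
      have h2 := hC2 s (hball hsb) x
      rw [pow_zero, one_mul] at h0
      rw [_root_.sq_abs] at h2
      calc ‖_‖ ≤ (C0 + C2) * (1+x^2)⁻¹ := DNLS.le_weight (norm_nonneg _) h0 h2
        _ ≤ max (C0+C2) 0 * (1+x^2)⁻¹ := by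
            exact mul_le_mul_of_nonneg_right (le_max_left _ _) (DNLS.weight_nonneg x)
    -- identifications of iterated derivatives
    have hid00 : ∀ s x : ℝ,
        iteratedDeriv 0 (fun σ => iteratedDeriv 0 (fun y => u σ y) x) s = u s x := by
      intro s x; simp [iteratedDeriv_zero]
    have hid01 : ∀ s x : ℝ,
        iteratedDeriv 0 (fun σ => iteratedDeriv 1 (fun y => u σ y) x) s = V (s, x) := by
      intro s x
      simp only [iteratedDeriv_zero, iteratedDeriv_one]
      exact (hxu s x).deriv
    have hid02 : ∀ s x : ℝ,
        iteratedDeriv 0 (fun σ => iteratedDeriv 2 (fun y => u σ y) x) s = W (s, x) := by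
      intro s x
      simp only [iteratedDeriv_zero, show (2:ℕ) = 1+1 from rfl, iteratedDeriv_succ,
        iteratedDeriv_one]
      have h : deriv (fun y => u s y) = fun y => V (s, y) := funext fun y => (hxu s y).deriv
      rw [h]
      exact (hxV s x).deriv
    have hid03 : ∀ s x : ℝ,
        iteratedDeriv 0 (fun σ => iteratedDeriv 3 (fun y => u σ y) x) s = Z (s, x) := by
      intro s x
      simp only [iteratedDeriv_zero, show (3:ℕ) = 1+1+1 from rfl, iteratedDeriv_succ,
        iteratedDeriv_one]
      have h : deriv (fun y => u s y) = fun y => V (s, y) := funext fun y => (hxu s y).deriv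
      rw [h]
      have h2 : deriv (fun y => V (s, y)) = fun y => W (s, y) := funext fun y => (hxV s y).deriv
      rw [h2]
      exact (hxW s x).deriv
    have hid10 : ∀ s x : ℝ,
        iteratedDeriv 1 (fun σ => iteratedDeriv 0 (fun y => u σ y) x) s = Pt (s, x) := by
      intro s x
      simp only [iteratedDeriv_zero, iteratedDeriv_one]
      exact (htu s x).deriv
    have hid11 : ∀ s x : ℝ,
        iteratedDeriv 1 (fun σ => iteratedDeriv 1 (fun y => u σ y) x) s = Vt (s, x) := by
      intro s x
      simp only [iteratedDeriv_one]
      have h : (fun σ => deriv (fun y => u σ y) x) = fun σ => V (σ, x) :=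
        funext fun σ => (hxu σ x).deriv
      rw [h]
      exact (htV s x).deriv
    obtain ⟨M00, hM00, hB00⟩ := hbnd 0 0
    obtain ⟨M01, hM01, hB01⟩ := hbnd 0 1
    obtain ⟨M02, hM02, hB02⟩ := hbnd 0 2
    obtain ⟨M10, hM10, hB10⟩ := hbnd 1 0
    obtain ⟨M11, hM11, hB11⟩ := hbnd 1 1
    have hu00 : ∀ s ∈ Metric.ball t₀ 1, ∀ x : ℝ, ‖u s x‖ ≤ M00 * (1+x^2)⁻¹ := by
      intro s hs x; rw [← hid00 s x]; exact hB00 s hs x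
    have hu01 : ∀ s ∈ Metric.ball t₀ 1, ∀ x : ℝ, ‖V (s, x)‖ ≤ M01 * (1+x^2)⁻¹ := by
      intro s hs x; rw [← hid01 s x]; exact hB01 s hs x
    have hu02 : ∀ s ∈ Metric.ball t₀ 1, ∀ x : ℝ, ‖W (s, x)‖ ≤ M02 * (1+x^2)⁻¹ := by
      intro s hs x; rw [← hid02 s x]; exact hB02 s hs x
    have hu10 : ∀ s ∈ Metric.ball t₀ 1, ∀ x : ℝ, ‖Pt (s, x)‖ ≤ M10 * (1+x^2)⁻¹ := by
      intro s hs x; rw [← hid10 s x]; exact hB10 s hs x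
    have hu11 : ∀ s ∈ Metric.ball t₀ 1, ∀ x : ℝ, ‖Vt (s, x)‖ ≤ M11 * (1+x^2)⁻¹ := by
      intro s hs x; rw [← hid11 s x]; exact hB11 s hs x
    have hw1 : ∀ x : ℝ, (0:ℝ) ≤ (1+x^2)⁻¹ := DNLS.weight_nonneg
    have hwle : ∀ x : ℝ, (1+x^2)⁻¹ ≤ (1:ℝ) := DNLS.weight_le_one
    have hunw : ∀ {M r : ℝ} (x : ℝ), 0 ≤ M → r ≤ M * (1+x^2)⁻¹ → r ≤ M := by
      intro M r x hM h
      calc r ≤ M * (1+x^2)⁻¹ := h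
        _ ≤ M * 1 := mul_le_mul_of_nonneg_left (hwle x) hM
        _ = M := mul_one M
    -- continuity facts
    have hcu : ∀ s : ℝ, Continuous (fun x => u s x) := fun s =>
      DNLS.continuous_slice hs.continuous s
    have hcV : ∀ s : ℝ, Continuous (fun x => V (s, x)) := fun s =>
      DNLS.continuous_slice hsV.continuous s
    have hcW : ∀ s : ℝ, Continuous (fun x => W (s, x)) := fun s =>
      DNLS.continuous_slice hsW.continuous s
    have hcPt : ∀ s : ℝ, Continuous (fun x => Pt (s, x)) := fun s =>
      DNLS.continuous_slice hsPt.continuous s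
    have hcVt : ∀ s : ℝ, Continuous (fun x => Vt (s, x)) := fun s =>
      DNLS.continuous_slice hsVt.continuous s
    have hconjc : ∀ {h : ℝ → ℂ}, Continuous h → Continuous (fun x => (starRingEnd ℂ) (h x)) := by
      intro h hh
      simpa only [starRingEnd_apply] using hh.star
    -- first parametric integral
    have H1 := hasDerivAt_integral_of_dominated_loc_of_deriv_le (μ := volume) (x₀ := t₀) (s := Metric.ball t₀ 1)
        (F := fun s x => (starRingEnd ℂ) (u s x) * V (s, x))
        (F' := fun s x => (starRingEnd ℂ) (Pt (s, x)) * V (s, x)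
          + (starRingEnd ℂ) (u s x) * Vt (s, x))
        (bound := fun x => (M10*M01 + M00*M11) * (1+x^2)⁻¹)
        (Metric.ball_mem_nhds t₀ one_pos)
        (Filter.Eventually.of_forall fun s =>
          (((hconjc (hcu s)).mul (hcV s)).aestronglyMeasurable))
        (by
          refine (DNLS.integrable_weight (M00*M01)).mono'
            (((hconjc (hcu t₀)).mul (hcV t₀)).aestronglyMeasurable)
            (Filter.Eventually.of_forall fun x => ?_)
          rw [norm_mul, RCLike.norm_conj]
          exact DNLS.mul_weight (norm_nonneg _) (norm_nonneg _) hM00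
            (hunw x hM00 (hu00 t₀ ht₀ball x)) (hu01 t₀ ht₀ball x))
        ((((hconjc (hcPt t₀)).mul (hcV t₀)).add
          ((hconjc (hcu t₀)).mul (hcVt t₀))).aestronglyMeasurable)
        (Filter.Eventually.of_forall fun x => by
          intro s hsb
          calc ‖(starRingEnd ℂ) (Pt (s, x)) * V (s, x)
              + (starRingEnd ℂ) (u s x) * Vt (s, x)‖
              ≤ ‖(starRingEnd ℂ) (Pt (s, x)) * V (s, x)‖
                + ‖(starRingEnd ℂ) (u s x) * Vt (s, x)‖ := norm_add_le _ _
            _ ≤ M10*M01*(1+x^2)⁻¹ + M00*M11*(1+x^2)⁻¹ := by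
                refine add_le_add ?_ ?_
                · rw [norm_mul, RCLike.norm_conj]
                  exact DNLS.mul_weight (norm_nonneg _) (norm_nonneg _) hM10
                    (hunw x hM10 (hu10 s hsb x)) (hu01 s hsb x)
                · rw [norm_mul, RCLike.norm_conj]
                  exact DNLS.mul_weight (norm_nonneg _) (norm_nonneg _) hM00
                    (hunw x hM00 (hu00 s hsb x)) (hu11 s hsb x)
            _ = (M10*M01 + M00*M11) * (1+x^2)⁻¹ := by ring)
        (DNLS.integrable_weight _)
        (Filter.Eventually.of_forall fun x => by
          intro s hsb
          exact ((htu s x).conjC.mul (htV s x)))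
    -- second parametric integral
    have H2 := hasDerivAt_integral_of_dominated_loc_of_deriv_le (μ := volume) (x₀ := t₀) (s := Metric.ball t₀ 1)
        (F := fun s x => (((starRingEnd ℂ) (u s x) * u s x).re)^2)
        (F' := fun s x => 2*(((starRingEnd ℂ) (u s x) * u s x).re)
          * (((starRingEnd ℂ) (Pt (s, x)) * u s x + (starRingEnd ℂ) (u s x) * Pt (s, x)).re))
        (bound := fun x => (2*(M00*M00)*(M10*M00 + M00*M10)) * (1+x^2)⁻¹)
        (Metric.ball_mem_nhds t₀ one_pos)
        (Filter.Eventually.of_forall fun s =>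
          (((Complex.continuous_re.comp ((hconjc (hcu s)).mul (hcu s))).pow 2).aestronglyMeasurable))
        (by
          refine (DNLS.integrable_weight (M00*M00*(M00*M00))).mono'
            ((Complex.continuous_re.comp ((hconjc (hcu t₀)).mul (hcu t₀))).pow 2).aestronglyMeasurable
            (Filter.Eventually.of_forall fun x => ?_)
          have h1 : |((starRingEnd ℂ) (u t₀ x) * u t₀ x).re| ≤ M00*M00 := by
            refine le_trans (DNLS.abs_re_le_norm _) ?_
            rw [norm_mul, RCLike.norm_conj]
            exact mul_le_mul (hunw x hM00 (hu00 t₀ ht₀ball x)) (hunw x hM00 (hu00 t₀ ht₀ball x))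
              (norm_nonneg _) hM00
          have h2 : |((starRingEnd ℂ) (u t₀ x) * u t₀ x).re| ≤ M00*M00 * (1+x^2)⁻¹ := by
            refine le_trans (DNLS.abs_re_le_norm _) ?_
            rw [norm_mul, RCLike.norm_conj]
            exact DNLS.mul_weight (norm_nonneg _) (norm_nonneg _) hM00
              (hunw x hM00 (hu00 t₀ ht₀ball x)) (hu00 t₀ ht₀ball x)
          calc ‖(((starRingEnd ℂ) (u t₀ x) * u t₀ x).re)^2‖
              = |((starRingEnd ℂ) (u t₀ x) * u t₀ x).re|
                * |((starRingEnd ℂ) (u t₀ x) * u t₀ x).re| := by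
                rw [Real.norm_eq_abs, pow_two, abs_mul]
            _ ≤ (M00*M00)*(M00*M00*(1+x^2)⁻¹) :=
                mul_le_mul h1 h2 (abs_nonneg _) (by positivity)
            _ = M00*M00*(M00*M00)*(1+x^2)⁻¹ := by ring)
        ((Continuous.aestronglyMeasurable (by
          exact ((continuous_const.mul
            (Complex.continuous_re.comp ((hconjc (hcu t₀)).mul (hcu t₀)))).mul
            (Complex.continuous_re.comp (((hconjc (hcPt t₀)).mul (hcu t₀)).add
              ((hconjc (hcu t₀)).mul (hcPt t₀))))))))
        (Filter.Eventually.of_forall fun x => by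
          intro s hsb
          have h1 : |((starRingEnd ℂ) (u s x) * u s x).re| ≤ M00*M00 := by
            refine le_trans (DNLS.abs_re_le_norm _) ?_
            rw [norm_mul, RCLike.norm_conj]
            exact mul_le_mul (hunw x hM00 (hu00 s hsb x)) (hunw x hM00 (hu00 s hsb x))
              (norm_nonneg _) hM00
          have hm : |((starRingEnd ℂ) (Pt (s, x)) * u s x
              + (starRingEnd ℂ) (u s x) * Pt (s, x)).re|
              ≤ (M10*M00 + M00*M10)*(1+x^2)⁻¹ := by
            refine le_trans (DNLS.abs_re_le_norm _) (le_trans (norm_add_le _ _) ?_)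
            rw [add_mul]
            refine add_le_add ?_ ?_
            · rw [norm_mul, RCLike.norm_conj]
              exact DNLS.mul_weight (norm_nonneg _) (norm_nonneg _) hM10
                (hunw x hM10 (hu10 s hsb x)) (hu00 s hsb x)
            · rw [norm_mul, RCLike.norm_conj]
              exact DNLS.mul_weight (norm_nonneg _) (norm_nonneg _) hM00
                (hunw x hM00 (hu00 s hsb x)) (hu10 s hsb x)
          have hmul := mul_le_mul h1 hm (abs_nonneg _) (by positivity : (0:ℝ) ≤ M00*M00)
          calc ‖2*(((starRingEnd ℂ) (u s x) * u s x).re)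
              * (((starRingEnd ℂ) (Pt (s, x)) * u s x
                + (starRingEnd ℂ) (u s x) * Pt (s, x)).re)‖
              = 2*(|((starRingEnd ℂ) (u s x) * u s x).re|
                * |((starRingEnd ℂ) (Pt (s, x)) * u s x
                  + (starRingEnd ℂ) (u s x) * Pt (s, x)).re|) := by
                simp only [Real.norm_eq_abs, abs_mul]
                rw [abs_of_pos (show (0:ℝ) < 2 by norm_num)]
                ring
            _ ≤ 2*((M00*M00)*((M10*M00 + M00*M10)*(1+x^2)⁻¹)) := by linarith
            _ = (2*(M00*M00)*(M10*M00 + M00*M10))*(1+x^2)⁻¹ := by ring)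
        (DNLS.integrable_weight _)
        (Filter.Eventually.of_forall fun x => by
          intro s hsb
          have base := (((htu s x).conjC.mul (htu s x)).reC)
          have hp := base.pow 2
          refine (hp.congr_deriv ?_).congr_of_eventuallyEq (Filter.Eventually.of_forall fun y => ?_)
          · simp only [Pi.mul_apply]; push_cast; ring
          · rfl)
    -- the flux function
    have hΦderiv : ∀ x : ℝ, HasDerivAt (fun y =>
        ((starRingEnd ℂ) (u t₀ y) * W (t₀, y)).re
          - ((starRingEnd ℂ) (V (t₀, y)) * V (t₀, y)).re
          - 3*(((starRingEnd ℂ) (u t₀ y) * u t₀ y).re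
            * ((starRingEnd ℂ) (u t₀ y) * V (t₀, y)).im)
          - (((starRingEnd ℂ) (u t₀ y) * u t₀ y).re)^3)
        (((starRingEnd ℂ) (Pt (t₀, x)) * V (t₀, x)
            + (starRingEnd ℂ) (u t₀ x) * Vt (t₀, x)).im
          + (1/2) * (2*(((starRingEnd ℂ) (u t₀ x) * u t₀ x).re)
            * (((starRingEnd ℂ) (Pt (t₀, x)) * u t₀ x
              + (starRingEnd ℂ) (u t₀ x) * Pt (t₀, x)).re))) x := by
      intro x
      have t1 := ((hxu t₀ x).conjC.mul (hxW t₀ x)).reC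
      have t2 := ((hxV t₀ x).conjC.mul (hxV t₀ x)).reC
      have tr := ((hxu t₀ x).conjC.mul (hxu t₀ x)).reC
      have tm := ((hxu t₀ x).conjC.mul (hxV t₀ x)).imC
      have t3 := (tr.mul tm).const_mul (3:ℝ)
      have t4 := tr.pow 3
      have hh := ((t1.sub t2).sub t3).sub t4
      refine (hh.congr_deriv ?_).congr_of_eventuallyEq (Filter.Eventually.of_forall fun y => ?_)
      · rw [hPteq t₀ x, hVteq t₀ x]
        have halg := DNLS.alg_identity (u t₀ x) (V (t₀, x)) (W (t₀, x)) (Z (t₀, x))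
        simp only [Pi.mul_apply]
        push_cast
        linarith [halg]
      · rfl
    -- decay of the flux
    have hΦbound : ∀ x : ℝ,
        |((starRingEnd ℂ) (u t₀ x) * W (t₀, x)).re
          - ((starRingEnd ℂ) (V (t₀, x)) * V (t₀, x)).re
          - 3*(((starRingEnd ℂ) (u t₀ x) * u t₀ x).re
            * ((starRingEnd ℂ) (u t₀ x) * V (t₀, x)).im)
          - (((starRingEnd ℂ) (u t₀ x) * u t₀ x).re)^3|
        ≤ (M00*M02 + M01*M01 + 3*((M00*M00)*(M00*M01))
            + (M00*M00)*(M00*M00)*(M00*M00)) * (1+x^2)⁻¹ := by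
      intro x
      have b1 : |((starRingEnd ℂ) (u t₀ x) * W (t₀, x)).re| ≤ M00*M02*(1+x^2)⁻¹ := by
        refine le_trans (DNLS.abs_re_le_norm _) ?_
        rw [norm_mul, RCLike.norm_conj]
        exact DNLS.mul_weight (norm_nonneg _) (norm_nonneg _) hM00
          (hunw x hM00 (hu00 t₀ ht₀ball x)) (hu02 t₀ ht₀ball x)
      have b2 : |((starRingEnd ℂ) (V (t₀, x)) * V (t₀, x)).re| ≤ M01*M01*(1+x^2)⁻¹ := by
        refine le_trans (DNLS.abs_re_le_norm _) ?_
        rw [norm_mul, RCLike.norm_conj]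
        exact DNLS.mul_weight (norm_nonneg _) (norm_nonneg _) hM01
          (hunw x hM01 (hu01 t₀ ht₀ball x)) (hu01 t₀ ht₀ball x)
      have hr : |((starRingEnd ℂ) (u t₀ x) * u t₀ x).re| ≤ M00*M00 := by
        refine le_trans (DNLS.abs_re_le_norm _) ?_
        rw [norm_mul, RCLike.norm_conj]
        exact mul_le_mul (hunw x hM00 (hu00 t₀ ht₀ball x)) (hunw x hM00 (hu00 t₀ ht₀ball x))
          (norm_nonneg _) hM00
      have hrw : |((starRingEnd ℂ) (u t₀ x) * u t₀ x).re| ≤ M00*M00*(1+x^2)⁻¹ := by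
        refine le_trans (DNLS.abs_re_le_norm _) ?_
        rw [norm_mul, RCLike.norm_conj]
        exact DNLS.mul_weight (norm_nonneg _) (norm_nonneg _) hM00
          (hunw x hM00 (hu00 t₀ ht₀ball x)) (hu00 t₀ ht₀ball x)
      have hmm : |((starRingEnd ℂ) (u t₀ x) * V (t₀, x)).im| ≤ M00*M01*(1+x^2)⁻¹ := by
        refine le_trans (DNLS.abs_im_le_norm _) ?_
        rw [norm_mul, RCLike.norm_conj]
        exact DNLS.mul_weight (norm_nonneg _) (norm_nonneg _) hM00
          (hunw x hM00 (hu00 t₀ ht₀ball x)) (hu01 t₀ ht₀ball x)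
      have b3 : |3*(((starRingEnd ℂ) (u t₀ x) * u t₀ x).re
          * ((starRingEnd ℂ) (u t₀ x) * V (t₀, x)).im)|
          ≤ 3*((M00*M00)*(M00*M01))*(1+x^2)⁻¹ := by
        have := mul_le_mul hr hmm (abs_nonneg _) (by positivity : (0:ℝ) ≤ M00*M00)
        calc |3*(((starRingEnd ℂ) (u t₀ x) * u t₀ x).re
            * ((starRingEnd ℂ) (u t₀ x) * V (t₀, x)).im)|
            = 3*(|((starRingEnd ℂ) (u t₀ x) * u t₀ x).re|
              * |((starRingEnd ℂ) (u t₀ x) * V (t₀, x)).im|) := by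
              rw [abs_mul, abs_mul]
              norm_num
          _ ≤ 3*((M00*M00)*((M00*M01)*(1+x^2)⁻¹)) := by linarith
          _ = 3*((M00*M00)*(M00*M01))*(1+x^2)⁻¹ := by ring
      have b4 : |(((starRingEnd ℂ) (u t₀ x) * u t₀ x).re)^3|
          ≤ (M00*M00)*(M00*M00)*(M00*M00)*(1+x^2)⁻¹ := by
        have h2 := mul_le_mul hr hr (abs_nonneg _) (by positivity : (0:ℝ) ≤ M00*M00)
        have h3 := mul_le_mul h2 hrw (abs_nonneg _)
          (by positivity : (0:ℝ) ≤ (M00*M00)*(M00*M00))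
        calc |(((starRingEnd ℂ) (u t₀ x) * u t₀ x).re)^3|
            = |((starRingEnd ℂ) (u t₀ x) * u t₀ x).re|
              * |((starRingEnd ℂ) (u t₀ x) * u t₀ x).re|
              * |((starRingEnd ℂ) (u t₀ x) * u t₀ x).re| := by
              rw [pow_succ, pow_two, abs_mul, abs_mul]
          _ ≤ (M00*M00)*(M00*M00)*(M00*M00*(1+x^2)⁻¹) := h3
          _ = (M00*M00)*(M00*M00)*(M00*M00)*(1+x^2)⁻¹ := by ring
      calc |((starRingEnd ℂ) (u t₀ x) * W (t₀, x)).re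
          - ((starRingEnd ℂ) (V (t₀, x)) * V (t₀, x)).re
          - 3*(((starRingEnd ℂ) (u t₀ x) * u t₀ x).re
            * ((starRingEnd ℂ) (u t₀ x) * V (t₀, x)).im)
          - (((starRingEnd ℂ) (u t₀ x) * u t₀ x).re)^3|
          ≤ |((starRingEnd ℂ) (u t₀ x) * W (t₀, x)).re
            - ((starRingEnd ℂ) (V (t₀, x)) * V (t₀, x)).re
            - 3*(((starRingEnd ℂ) (u t₀ x) * u t₀ x).re
              * ((starRingEnd ℂ) (u t₀ x) * V (t₀, x)).im)|
            + |(((starRingEnd ℂ) (u t₀ x) * u t₀ x).re)^3| := abs_sub _ _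
        _ ≤ |((starRingEnd ℂ) (u t₀ x) * W (t₀, x)).re
            - ((starRingEnd ℂ) (V (t₀, x)) * V (t₀, x)).re|
            + |3*(((starRingEnd ℂ) (u t₀ x) * u t₀ x).re
              * ((starRingEnd ℂ) (u t₀ x) * V (t₀, x)).im)|
            + |(((starRingEnd ℂ) (u t₀ x) * u t₀ x).re)^3| := by
            linarith [abs_sub (((starRingEnd ℂ) (u t₀ x) * W (t₀, x)).re
              - ((starRingEnd ℂ) (V (t₀, x)) * V (t₀, x)).re)
              (3*(((starRingEnd ℂ) (u t₀ x) * u t₀ x).re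
                * ((starRingEnd ℂ) (u t₀ x) * V (t₀, x)).im))]
        _ ≤ |((starRingEnd ℂ) (u t₀ x) * W (t₀, x)).re|
            + |((starRingEnd ℂ) (V (t₀, x)) * V (t₀, x)).re|
            + |3*(((starRingEnd ℂ) (u t₀ x) * u t₀ x).re
              * ((starRingEnd ℂ) (u t₀ x) * V (t₀, x)).im)|
            + |(((starRingEnd ℂ) (u t₀ x) * u t₀ x).re)^3| := by
            linarith [abs_sub (((starRingEnd ℂ) (u t₀ x) * W (t₀, x)).re)
              (((starRingEnd ℂ) (V (t₀, x)) * V (t₀, x)).re)]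
        _ ≤ (M00*M02 + M01*M01 + 3*((M00*M00)*(M00*M01))
            + (M00*M00)*(M00*M00)*(M00*M00)) * (1+x^2)⁻¹ := by
            rw [add_mul, add_mul, add_mul]
            exact add_le_add (add_le_add (add_le_add b1 b2) b3) b4
    have htopΦ : Filter.Tendsto (fun x =>
        ((starRingEnd ℂ) (u t₀ x) * W (t₀, x)).re
          - ((starRingEnd ℂ) (V (t₀, x)) * V (t₀, x)).re
          - 3*(((starRingEnd ℂ) (u t₀ x) * u t₀ x).re
            * ((starRingEnd ℂ) (u t₀ x) * V (t₀, x)).im)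
          - (((starRingEnd ℂ) (u t₀ x) * u t₀ x).re)^3) Filter.atTop (nhds 0) :=
      squeeze_zero_norm (fun x => by
        rw [Real.norm_eq_abs]; exact hΦbound x) (DNLS.tendsto_weight_atTop _)
    have hbotΦ : Filter.Tendsto (fun x =>
        ((starRingEnd ℂ) (u t₀ x) * W (t₀, x)).re
          - ((starRingEnd ℂ) (V (t₀, x)) * V (t₀, x)).re
          - 3*(((starRingEnd ℂ) (u t₀ x) * u t₀ x).re
            * ((starRingEnd ℂ) (u t₀ x) * V (t₀, x)).im)
          - (((starRingEnd ℂ) (u t₀ x) * u t₀ x).re)^3) Filter.atBot (nhds 0) :=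
      squeeze_zero_norm (fun x => by
        rw [Real.norm_eq_abs]; exact hΦbound x) (DNLS.tendsto_weight_atBot _)
    -- integrability of the momentum-density time derivative
    have hDDint : Integrable (fun x : ℝ =>
        ((starRingEnd ℂ) (Pt (t₀, x)) * V (t₀, x)
          + (starRingEnd ℂ) (u t₀ x) * Vt (t₀, x)).im
        + (1/2) * (2*(((starRingEnd ℂ) (u t₀ x) * u t₀ x).re)
          * (((starRingEnd ℂ) (Pt (t₀, x)) * u t₀ x
            + (starRingEnd ℂ) (u t₀ x) * Pt (t₀, x)).re))) := by
      exact H1.1.im.add (H2.1.const_mul (1/2))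
    -- the integral of the density vanishes
    have hDD0 : (∫ x : ℝ,
        (((starRingEnd ℂ) (Pt (t₀, x)) * V (t₀, x)
          + (starRingEnd ℂ) (u t₀ x) * Vt (t₀, x)).im
        + (1/2) * (2*(((starRingEnd ℂ) (u t₀ x) * u t₀ x).re)
          * (((starRingEnd ℂ) (Pt (t₀, x)) * u t₀ x
            + (starRingEnd ℂ) (u t₀ x) * Pt (t₀, x)).re)))) = 0 := by
      have hIic := integral_Iic_of_hasDerivAt_of_tendsto' (a := (0:ℝ))
        (fun x _ => hΦderiv x) hDDint.integrableOn hbotΦ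
      have hIoi := integral_Ioi_of_hasDerivAt_of_tendsto' (a := (0:ℝ))
        (fun x _ => hΦderiv x) hDDint.integrableOn htopΦ
      rw [← intervalIntegral.integral_Iic_add_Ioi hDDint.integrableOn hDDint.integrableOn, hIic, hIoi]
      ring
    -- assemble
    rw [hmomeq]
    have h1 : HasDerivAt (fun s => (∫ x : ℝ, (starRingEnd ℂ) (u s x) * V (s, x)).im)
        ((∫ x : ℝ, ((starRingEnd ℂ) (Pt (t₀, x)) * V (t₀, x)
          + (starRingEnd ℂ) (u t₀ x) * Vt (t₀, x))).im) t₀ := by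
      exact Complex.imCLM.hasFDerivAt.comp_hasDerivAt t₀ H1.2
    have h2 : HasDerivAt (fun s =>
        (1/2) * ∫ x : ℝ, (((starRingEnd ℂ) (u s x) * u s x).re)^2)
        ((1/2) * ∫ x : ℝ, 2*(((starRingEnd ℂ) (u t₀ x) * u t₀ x).re)
          * (((starRingEnd ℂ) (Pt (t₀, x)) * u t₀ x
            + (starRingEnd ℂ) (u t₀ x) * Pt (t₀, x)).re)) t₀ :=
      H2.2.const_mul (1/2)
    have hval : (∫ x : ℝ, ((starRingEnd ℂ) (Pt (t₀, x)) * V (t₀, x)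
          + (starRingEnd ℂ) (u t₀ x) * Vt (t₀, x))).im
        + (1/2) * ∫ x : ℝ, 2*(((starRingEnd ℂ) (u t₀ x) * u t₀ x).re)
          * (((starRingEnd ℂ) (Pt (t₀, x)) * u t₀ x
            + (starRingEnd ℂ) (u t₀ x) * Pt (t₀, x)).re) = 0 := by
      have him : (∫ x : ℝ, ((starRingEnd ℂ) (Pt (t₀, x)) * V (t₀, x)
            + (starRingEnd ℂ) (u t₀ x) * Vt (t₀, x))).im
          = ∫ x : ℝ, ((starRingEnd ℂ) (Pt (t₀, x)) * V (t₀, x)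
            + (starRingEnd ℂ) (u t₀ x) * Vt (t₀, x)).im := by
        have := integral_im (μ := (volume : Measure ℝ)) H1.1
        simpa using this.symm
      have hint1 : Integrable (fun x : ℝ => ((starRingEnd ℂ) (Pt (t₀, x)) * V (t₀, x)
          + (starRingEnd ℂ) (u t₀ x) * Vt (t₀, x)).im) := H1.1.im
      have hint2 : Integrable (fun x : ℝ => (1/2) * (2*(((starRingEnd ℂ) (u t₀ x) * u t₀ x).re)
          * (((starRingEnd ℂ) (Pt (t₀, x)) * u t₀ x
            + (starRingEnd ℂ) (u t₀ x) * Pt (t₀, x)).re))) := H2.1.const_mul (1/2)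
      rw [him, ← integral_const_mul, ← integral_add hint1 hint2]
      exact hDD0
    have hfinal := h1.add h2
    rw [hval] at hfinal
    exact hfinal
  have := is_const_of_deriv_eq_zero (fun t => (hP t).differentiableAt)
    (fun t => (hP t).deriv) t₁ t₂
  exact this
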